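/- Let k be an algebraically closed field of characteristic zero, Λ a finitely generated abelian group, and A a Λ-graded commutative integral domain which is a k-algebra with each nonzero homogeneous component A_λ one-dimensional over k and A_0 = k. Let Γ = {λ : A_λ ≠ 0} be the support monoid. Then A is isomorphic as a Λ-graded k-algebra to the monoid algebra k[Γ]. -/

import Mathlib

noncomputable section

noncomputable def unitsRootableBy (k : Type*) [Field k] [IsAlgClosed k] : RootableBy kˣ ℤ := by
  have : RootableBy kˣ ℕ := by
    apply rootableByOfPowLeftSurj
    intro n hn a
    obtain ⟨z, hz⟩ := IsAlgClosed.exists_pow_nat_eq (a : k) (Nat.pos_of_ne_zero hn)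
    have hz0 : z ≠ 0 := by
      rintro rfl; rw [zero_pow hn] at hz; exact a.ne_zero hz.symm
    exact ⟨Units.mk0 z hz0, Units.ext (by simpa using hz)⟩
  exact Group.rootableByIntOfRootableByNat kˣ

/-- Retraction lemma: a divisible (rootable) abelian group is a retract along any injection. -/
lemma exists_retraction {A : Type u} {B : Type v} [CommGroup A] [CommGroup B]
    (hA : RootableBy A ℤ) (f : A →* B) (hf : Function.Injective f) :
    ∃ r : B →* A, ∀ a, r (f a) = a := by
  have divA : DivisibleBy (Additive A) ℤ :=
    { div := fun a n => Additive.ofMul (RootableBy.root (α := ℤ) a.toMul n)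
      div_zero := fun a => by
        simpa using congrArg Additive.ofMul (RootableBy.root_zero (α := ℤ) a.toMul)
      div_cancel := fun {n} a hn => by
        simpa using congrArg Additive.ofMul (RootableBy.root_cancel (α := ℤ) a.toMul hn) }
  letI Q := ULift.{v} (Additive A)
  haveI : DivisibleBy Q ℤ :=
    { div := fun a n => ULift.up (DivisibleBy.div a.down n)
      div_zero := fun a => by ext; simpa using DivisibleBy.div_zero a.down
      div_cancel := fun {n} a hn => by
        ext; exact DivisibleBy.div_cancel a.down hn }
  have baer : Module.Baer ℤ Q := Module.Baer.of_divisible Q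
  have inj : Module.Injective ℤ Q := baer.injective
  letI X := ULift.{v} (Additive A)
  letI Y := ULift.{u} (Additive B)
  let f0 : X →+ Y := AddMonoidHom.mk' (fun x => ULift.up (Additive.ofMul (f x.down.toMul)))
    (fun a b => by ext; exact f.map_mul _ _)
  have hf0 : Function.Injective f0 := by
    intro a b hab
    have := hf (congrArg (fun y : Y => y.down.toMul) hab)
    exact ULift.ext _ _ (by exact this)
  obtain ⟨h, hh⟩ := inj.out f0.toIntLinearMap hf0 (LinearMap.id : X →ₗ[ℤ] Q)
  refine ⟨MonoidHom.mk' (fun b => (h (ULift.up (Additive.ofMul b))).down.toMul) ?_, ?_⟩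
  · intro a b
    show Additive.toMul (h (ULift.up (Additive.ofMul (a * b)))).down = _
    have e1 : (ULift.up (Additive.ofMul (a * b)) : Y)
        = ULift.up (Additive.ofMul a) + ULift.up (Additive.ofMul b) := rfl
    rw [e1, h.map_add]; rfl
  · intro a
    exact congrArg (fun q : Q => q.down.toMul) (hh (ULift.up (Additive.ofMul a)))

theorem stmt1 {k A Λ : Type*} [Field k] [IsAlgClosed k] [CharZero k]
    [AddCommGroup Λ] [DecidableEq Λ] [AddGroup.FG Λ]
    [CommRing A] [IsDomain A] [Algebra k A]
    (𝒜 : Λ → Submodule k A) [GradedAlgebra 𝒜]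
    (hdim : ∀ lam, 𝒜 lam = ⊥ ∨ Module.finrank k (𝒜 lam) = 1)
    (hzero : 𝒜 0 = Submodule.span k {1})
    (Γ : AddSubmonoid Λ) (hΓ : ∀ lam, lam ∈ Γ ↔ 𝒜 lam ≠ ⊥) :
    ∃ e : A ≃ₐ[k] AddMonoidAlgebra k Γ,
      ∀ lam : Λ, Submodule.map e.toLinearMap (𝒜 lam)
        ≤ AddMonoidAlgebra.gradeBy k (fun γ : Γ => (γ : Λ)) lam := by
  classical
  -- choose nonzero homogeneous elements
  have hexists : ∀ γ : Γ, ∃ a : A, a ∈ 𝒜 (γ : Λ) ∧ a ≠ 0 := by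
    intro γ
    have hne := (hΓ γ).mp γ.2
    rcases (Submodule.ne_bot_iff _).mp hne with ⟨a, ha, h0⟩
    exact ⟨a, ha, h0⟩
  choose x0 hx0 hx0' using hexists
  set x : Γ → A := fun γ => if γ = 0 then 1 else x0 γ with hxdef
  have hx0eq : x 0 = 1 := if_pos rfl
  have hxmem : ∀ γ : Γ, x γ ∈ 𝒜 (γ : Λ) := by
    intro γ
    by_cases h : γ = 0
    · subst h
      rw [hx0eq]
      have : ((0 : Γ) : Λ) = 0 := rfl
      rw [this, hzero]
      exact Submodule.mem_span_singleton_self 1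
    · simpa [x, h] using hx0 γ
  have hxne : ∀ γ : Γ, x γ ≠ 0 := by
    intro γ
    by_cases h : γ = 0
    · subst h; rw [hx0eq]; exact one_ne_zero
    · simpa [x, h] using hx0' γ
  -- each component is spanned by x γ
  have hspan : ∀ (γ : Γ) (a : A), a ∈ 𝒜 (γ : Λ) → ∃ t : k, a = t • x γ := by
    intro γ a ha
    have hne := (hΓ γ).mp γ.2
    have hfr : Module.finrank k (𝒜 (γ : Λ)) = 1 := (hdim γ).resolve_left hne
    have hv : (⟨x γ, hxmem γ⟩ : 𝒜 (γ : Λ)) ≠ 0 := by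
      intro h; exact hxne γ (congrArg Subtype.val h)
    obtain ⟨t, ht⟩ := (finrank_eq_one_iff_of_nonzero' _ hv).mp hfr ⟨a, ha⟩
    refine ⟨t, ?_⟩
    have := congrArg Subtype.val ht
    simpa using this.symm
  -- multiplicativity
  have hmul : ∀ γ δ : Γ, x γ * x δ ∈ 𝒜 ((γ + δ : Γ) : Λ) := by
    intro γ δ
    have := SetLike.mul_mem_graded (hxmem γ) (hxmem δ)
    rwa [show ((γ : Λ) + (δ : Λ)) = ((γ + δ : Γ) : Λ) from rfl] at this
  have hc : ∀ γ δ : Γ, ∃ t : kˣ, x γ * x δ = (t : k) • x (γ + δ) := by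
    intro γ δ
    obtain ⟨t, ht⟩ := hspan (γ + δ) _ (hmul γ δ)
    have htne : t ≠ 0 := by
      rintro rfl
      rw [zero_smul] at ht
      exact mul_ne_zero (hxne γ) (hxne δ) ht
    exact ⟨Units.mk0 t htne, ht⟩
  choose c hcx using hc
  -- fraction field and retraction
  let F := FractionRing A
  let ι : A →+* F := algebraMap A F
  have hι : Function.Injective ι := IsFractionRing.injective A F
  have hιne : ∀ γ : Γ, ι (x γ) ≠ 0 := fun γ => (map_ne_zero_iff ι hι).mpr (hxne γ)
  let X : Γ → Fˣ := fun γ => Units.mk0 (ι (x γ)) (hιne γ)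
  let uk : kˣ →* Fˣ := Units.map ((ι.comp (algebraMap k A)) : k →* F)
  have huk : Function.Injective uk := by
    intro a b hab
    exact Units.ext ((ι.comp (algebraMap k A)).injective (congrArg Units.val hab))
  obtain ⟨r, hr⟩ := exists_retraction (unitsRootableBy k) uk huk
  set b : Γ → kˣ := fun γ => r (X γ) with hbdef
  have hX : ∀ γ δ, X γ * X δ = uk (c γ δ) * X (γ + δ) := by
    intro γ δ
    apply Units.ext
    show ι (x γ) * ι (x δ) = ι (algebraMap k A (c γ δ)) * ι (x (γ + δ))
    rw [← map_mul, ← map_mul, hcx γ δ, Algebra.smul_def]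
  have hb : ∀ γ δ, b γ * b δ = c γ δ * b (γ + δ) := by
    intro γ δ
    have := congrArg r (hX γ δ)
    rwa [map_mul, map_mul, hr] at this
  have hb0 : b 0 = 1 := by
    have hX0 : X 0 = 1 := Units.ext (by simp [X, hx0eq])
    rw [hbdef]; simp only [hX0, map_one]
  -- rescaled basis
  set y : Γ → A := fun γ => (((b γ)⁻¹ : kˣ) : k) • x γ with hydef
  have hymul : ∀ γ δ, y γ * y δ = y (γ + δ) := by
    intro γ δ
    rw [hydef]
    simp only []
    rw [smul_mul_smul_comm, hcx γ δ, smul_smul]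
    congr 1
    have : (b γ)⁻¹ * (b δ)⁻¹ * c γ δ = (b (γ + δ))⁻¹ := by
      calc (b γ)⁻¹ * (b δ)⁻¹ * c γ δ = (b γ * b δ)⁻¹ * c γ δ := by rw [mul_inv]
        _ = (c γ δ * b (γ + δ))⁻¹ * c γ δ := by rw [hb γ δ]
        _ = (b (γ + δ))⁻¹ := by
            rw [mul_inv, mul_comm ((c γ δ)⁻¹) ((b (γ + δ))⁻¹), mul_assoc, inv_mul_cancel, mul_one]
    calc ((b γ)⁻¹ : kˣ) * ((b δ)⁻¹ : kˣ) * (c γ δ : k)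
        = (((b γ)⁻¹ * (b δ)⁻¹ * c γ δ : kˣ) : k) := by push_cast; ring
      _ = (((b (γ + δ))⁻¹ : kˣ) : k) := by rw [this]
  have hy0 : y 0 = 1 := by
    rw [hydef]; simp only [hb0, hx0eq, inv_one, Units.val_one, one_smul]
  have hymem : ∀ γ : Γ, y γ ∈ 𝒜 (γ : Λ) := fun γ => Submodule.smul_mem _ _ (hxmem γ)
  have hyne : ∀ γ : Γ, y γ ≠ 0 := fun γ => smul_ne_zero (Units.ne_zero _) (hxne γ)
  have hxy : ∀ γ : Γ, x γ = ((b γ : k)) • y γ := by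
    intro γ
    rw [hydef]
    simp only [smul_smul]
    rw [show ((b γ : k)) * (((b γ)⁻¹ : kˣ) : k) = ((b γ * (b γ)⁻¹ : kˣ) : k) from by push_cast; ring,
      mul_inv_cancel, Units.val_one, one_smul]
  -- the algebra homomorphism
  let Y : Multiplicative Γ →* A :=
    { toFun := fun g => y (Multiplicative.toAdd g)
      map_one' := hy0
      map_mul' := fun g h => (hymul _ _).symm }
  let e' : AddMonoidAlgebra k Γ →ₐ[k] A := AddMonoidAlgebra.lift k A Γ Y
  have he'single : ∀ (γ : Γ) (t : k), e' (AddMonoidAlgebra.single γ t) = t • y γ := by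
    intro γ t
    rw [AddMonoidAlgebra.lift_single]
    rfl
  -- injectivity
  have hind : LinearIndependent k y := by
    have h1 : iSupIndep 𝒜 := (DirectSum.Decomposition.isInternal 𝒜).submodule_iSupIndep
    have h2 : iSupIndep (fun γ : Γ => 𝒜 (γ : Λ)) := h1.comp Subtype.val_injective
    exact h2.linearIndependent _ hymem hyne
  have hinj : Function.Injective e' := by
    have heq : (e'.toLinearMap : AddMonoidAlgebra k Γ →ₗ[k] A)
        ∘ₗ (AddMonoidAlgebra.coeffLinearEquiv k).symm.toLinearMap
        = Finsupp.linearCombination k y := by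
      apply Finsupp.lhom_ext
      intro γ t
      show e' (AddMonoidAlgebra.single γ t) = _
      rw [he'single, Finsupp.linearCombination_single]
    intro p q hpq
    have := hind (a₁ := p.coeff) (a₂ := q.coeff) (by
      rw [← heq]; exact hpq)
    cases p; cases q; cases this; rfl
  -- surjectivity
  have hsurj : Function.Surjective e' := by
    have hrange : ∀ lam : Λ, 𝒜 lam ≤ LinearMap.range e'.toLinearMap := by
      intro lam a ha
      by_cases h : lam ∈ Γ
      · obtain ⟨t, ht⟩ := hspan ⟨lam, h⟩ a ha
        refine ⟨AddMonoidAlgebra.single ⟨lam, h⟩ (t * (b ⟨lam, h⟩ : k)), ?_⟩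
        show e' _ = a
        rw [he'single, mul_smul, ← hxy, ht]
      · have hbot : 𝒜 lam = ⊥ := not_not.mp (fun hne => h ((hΓ lam).mpr hne))
        rw [hbot, Submodule.mem_bot] at ha
        exact ⟨0, by rw [map_zero, ha]⟩
    have htop : (⊤ : Submodule k A) ≤ LinearMap.range e'.toLinearMap := by
      rw [← (DirectSum.Decomposition.isInternal 𝒜).submodule_iSup_eq_top]
      exact iSup_le hrange
    intro a
    exact htop (Submodule.mem_top (x := a))
  let E : AddMonoidAlgebra k Γ ≃ₐ[k] A := AlgEquiv.ofBijective e' ⟨hinj, hsurj⟩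
  have hE : ∀ p, E p = e' p := fun p => rfl
  refine ⟨E.symm, ?_⟩
  intro lam z hz
  obtain ⟨a, ha, rfl⟩ := Submodule.mem_map.mp hz
  show E.symm a ∈ AddMonoidAlgebra.gradeBy k (fun γ : Γ => (γ : Λ)) lam
  by_cases h : lam ∈ Γ
  · obtain ⟨t, ht⟩ := hspan ⟨lam, h⟩ a ha
    have ha' : a = E (AddMonoidAlgebra.single ⟨lam, h⟩ (t * (b ⟨lam, h⟩ : k))) := by
      rw [hE, he'single, mul_smul, ← hxy, ← ht]
    rw [ha', AlgEquiv.symm_apply_apply]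
    have := AddMonoidAlgebra.single_mem_gradeBy (R := k)
      (fun γ : Γ => (γ : Λ)) ⟨lam, h⟩ (t * (b ⟨lam, h⟩ : k))
    exact this
  · have hbot : 𝒜 lam = ⊥ := not_not.mp (fun hne => h ((hΓ lam).mpr hne))
    rw [hbot, Submodule.mem_bot] at ha
    rw [ha, map_zero]
    exact Submodule.zero_mem _

end
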